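/- Let n ≥ 1, λ = 16·log(40n), t > 0. Suppose A has full row rank, (x, s) ∈ P° × D°, and Φ((xs − t·1)/t) ≤ 16n. Let x̄, s̄ ∈ ℝ^n_{>0} satisfy ‖ln x̄ − ln x‖_∞ ≤ 1/48 and ‖ln s̄ − ln s‖_∞ ≤ 1/48, let δ̄_μ ∈ ℝ^n with ‖δ̄_μ‖₂ ≤ t/(32λ), and let (δ_x, δ_s, δ_y) solve S̄ δ_x + X̄ δ_s = δ̄_μ, A δ_x = 0, Aᵀ δ_y + δ_s = 0, where X̄ = Diag(x̄), S̄ = Diag(s̄). Then x' = x + δ_x and s' = s + δ_s are strictly positive and satisfy ‖ln x' − ln x‖₂ ≤ 1/(8λ) and ‖ln s' − ln s‖₂ ≤ 1/(8λ). -/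

import Mathlib

open Matrix

/-- The ℓ2 norm. -/
noncomputable def l2 {n : ℕ} (u : Fin n → ℝ) : ℝ := Real.sqrt (∑ i, (u i) ^ 2)

/-- The ℓ∞ norm. -/
noncomputable def linf {n : ℕ} (u : Fin n → ℝ) : ℝ := ⨆ i, |u i|

theorem abs_log_one_add_le' (u : ℝ) (h : -(1/2:ℝ) ≤ u) : |Real.log (1+u)| ≤ 2*|u| := by
  have hpos : 0 < 1 + u := by linarith
  have h1 : Real.log (1+u) ≤ u := by
    have := Real.log_le_sub_one_of_pos hpos
    linarith
  have h2 : u/(1+u) ≤ Real.log (1+u) := by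
    have h3 := Real.log_le_sub_one_of_pos (x := (1+u)⁻¹) (by positivity)
    rw [Real.log_inv] at h3
    have h4 : (1+u)⁻¹ - 1 = -(u/(1+u)) := by field_simp; ring
    linarith [h4 ▸ h3]
  rw [abs_le]
  constructor
  · rcases le_or_gt 0 u with hu | hu
    · have h5 : 0 ≤ u/(1+u) := by positivity
      have h6 : |u| = u := abs_of_nonneg hu
      nlinarith [abs_nonneg u]
    · have hau : |u| = -u := abs_of_neg hu
      have h7 : -(2*|u|) ≤ u/(1+u) := by
        rw [le_div_iff₀ hpos, hau]
        nlinarith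
      linarith
  · calc Real.log (1+u) ≤ u := h1
      _ ≤ |u| := le_abs_self u
      _ ≤ 2*|u| := by nlinarith [abs_nonneg u]

theorem side_lemma {n : ℕ} (t lam : ℝ) (ht : 0 < t) (hlam : 3 ≤ lam)
    (x xb sb δ : Fin n → ℝ)
    (hx : ∀ i, 0 < x i)
    (hgl : ∀ i, 7/8 * t ≤ xb i * sb i)
    (hgu : ∀ i, xb i * sb i ≤ 9/8 * t)
    (hxs : ∀ i, 9/10 * t ≤ x i * sb i)
    (hW : ∑ i, (sb i * δ i)^2 / (xb i * sb i) ≤ 8/7 * t / (32*lam)^2) :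
    (∀ i, 0 < x i + δ i) ∧
    l2 (fun i => Real.log (x i + δ i) - Real.log (x i)) ≤ 1/(8*lam) := by
  have hlam0 : 0 < lam := by linarith
  have hg0 : ∀ i, 0 < xb i * sb i := fun i => lt_of_lt_of_le (by positivity) (hgl i)
  have hp2 : ∀ i, (δ i / x i)^2 ≤ 25/(18*t) * ((sb i * δ i)^2/(xb i*sb i)) := by
    intro i
    have hx0 := hx i
    have hsx : 9/10*t ≤ x i * sb i := hxs i
    have hsx0 : 0 < x i * sb i := lt_of_lt_of_le (by positivity) hsx
    have hsb0 : 0 < sb i := by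
      by_contra hc
      push_neg at hc
      nlinarith
    have hxb0 : 0 < xb i := by nlinarith [hg0 i]
    have key : (δ i / x i)^2 = (sb i * δ i)^2/(xb i*sb i) * ((xb i * sb i)/(x i * sb i)^2) := by
      field_simp
    rw [key]
    have h1 : (xb i * sb i)/(x i*sb i)^2 ≤ 25/(18*t) := by
      rw [div_le_div_iff₀ (by positivity) (by positivity)]
      nlinarith [hgu i, hsx, sq_nonneg (x i * sb i - 9/10*t)]
    calc (sb i * δ i)^2/(xb i*sb i) * ((xb i * sb i)/(x i * sb i)^2)
        ≤ (sb i * δ i)^2/(xb i*sb i) * (25/(18*t)) :=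
          mul_le_mul_of_nonneg_left h1 (div_nonneg (sq_nonneg _) (hg0 i).le)
      _ = 25/(18*t) * ((sb i * δ i)^2/(xb i*sb i)) := by ring
  have hsum : ∑ i, (δ i / x i)^2 ≤ (1/(25*lam))^2 := by
    have h1 : ∑ i, (δ i/x i)^2 ≤ ∑ i, 25/(18*t) * ((sb i * δ i)^2/(xb i*sb i)) :=
      Finset.sum_le_sum (fun i _ => hp2 i)
    rw [← Finset.mul_sum] at h1
    have h2 : 25/(18*t) * (∑ i, (sb i * δ i)^2/(xb i*sb i)) ≤ 25/(18*t) * (8/7*t/(32*lam)^2) :=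
      mul_le_mul_of_nonneg_left hW (by positivity)
    have h3 : 25/(18*t)*(8/7*t/(32*lam)^2) ≤ (1/(25*lam))^2 := by
      have e1 : 25 / (18 * t) * (8 / 7 * t / (32 * lam) ^ 2) = 200 / (129024 * lam^2) := by
        field_simp
        ring
      have e2 : (1/(25*lam))^2 = 1/(625*lam^2) := by ring
      rw [e1, e2, div_le_div_iff₀ (by positivity) (by positivity)]
      nlinarith
    linarith
  have hcomp : ∀ i, |δ i / x i| ≤ 1/(25*lam) := by
    intro i
    have h1 : (δ i / x i)^2 ≤ (1/(25*lam))^2 :=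
      le_trans (Finset.single_le_sum (f := fun j => (δ j / x j)^2)
        (fun j _ => sq_nonneg _) (Finset.mem_univ i)) hsum
    calc |δ i / x i| = Real.sqrt ((δ i / x i)^2) := (Real.sqrt_sq_eq_abs _).symm
      _ ≤ Real.sqrt ((1/(25*lam))^2) := Real.sqrt_le_sqrt h1
      _ = 1/(25*lam) := Real.sqrt_sq (by positivity)
  have hhalf : ∀ i, -(1/2:ℝ) ≤ δ i / x i ∧ δ i / x i ≤ 1/2 := by
    intro i
    have := hcomp i
    have h25 : 1/(25*lam) ≤ 1/2 := by
      rw [div_le_div_iff₀ (by positivity) (by norm_num)]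
      linarith
    rw [abs_le] at this
    constructor <;> linarith [this.1, this.2]
  have hpos : ∀ i, 0 < x i + δ i := by
    intro i
    have hx0 := hx i
    have h1 := (hhalf i).1
    have h2 : x i + δ i = x i * (1 + δ i / x i) := by field_simp
    rw [h2]
    have : (0:ℝ) < 1 + δ i / x i := by linarith
    positivity
  refine ⟨hpos, ?_⟩
  have hlogeq : ∀ i, Real.log (x i + δ i) - Real.log (x i) = Real.log (1 + δ i / x i) := by
    intro i
    have hx0 := hx i
    have h2 : x i + δ i = x i * (1 + δ i / x i) := by field_simp
    rw [h2, Real.log_mul hx0.ne' (by linarith [(hhalf i).1])]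
    ring
  have hterms : ∀ i, (Real.log (x i + δ i) - Real.log (x i))^2 ≤ 4 * (δ i / x i)^2 := by
    intro i
    rw [hlogeq i]
    have h1 := abs_log_one_add_le' (δ i / x i) (hhalf i).1
    calc (Real.log (1 + δ i / x i))^2 = |Real.log (1 + δ i / x i)|^2 := (sq_abs _).symm
      _ ≤ (2*|δ i / x i|)^2 := by nlinarith [abs_nonneg (Real.log (1 + δ i / x i))]
      _ = 4 * (δ i / x i)^2 := by rw [mul_pow, sq_abs]; ring
  have hS : ∑ i, (Real.log (x i + δ i) - Real.log (x i))^2 ≤ (1/(8*lam))^2 := by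
    calc ∑ i, (Real.log (x i + δ i) - Real.log (x i))^2
        ≤ ∑ i, 4 * (δ i / x i)^2 := Finset.sum_le_sum (fun i _ => hterms i)
      _ = 4 * ∑ i, (δ i / x i)^2 := by rw [Finset.mul_sum]
      _ ≤ 4 * (1/(25*lam))^2 := by linarith [hsum]
      _ ≤ (1/(8*lam))^2 := by
          have e2 : 4*(1/(25*lam))^2 = 4/(625*lam^2) := by ring
          have e3 : (1/(8*lam))^2 = 1/(64*lam^2) := by ring
          rw [e2, e3, div_le_div_iff₀ (by positivity) (by positivity)]
          nlinarith
  show Real.sqrt _ ≤ _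
  calc Real.sqrt (∑ i, (Real.log (x i + δ i) - Real.log (x i))^2)
      ≤ Real.sqrt ((1/(8*lam))^2) := Real.sqrt_le_sqrt hS
    _ = 1/(8*lam) := Real.sqrt_sq (by positivity)

set_option maxHeartbeats 1000000 in
/-- Change of `x` and `s` in one robust step: under the invariant
`Φ((xs − t·1)/t) ≤ 16n` with `λ = 16 log(40n)` and a step solving the barred
Newton system with `‖δ̄μ‖₂ ≤ t/(32λ)`, the new points `x' = x + δx`, `s' = s + δs`
are strictly positive and `‖ln x' − ln x‖₂ ≤ 1/(8λ)`, `‖ln s' − ln s‖₂ ≤ 1/(8λ)`. -/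
theorem robust_step_log_change {d n : ℕ} (hn : 1 ≤ n)
    (A : Matrix (Fin d) (Fin n) ℝ) (b : Fin d → ℝ) (c : Fin n → ℝ)
    (hA : A.rank = d)
    (t : ℝ) (ht : 0 < t)
    (x s : Fin n → ℝ)
    (hx : A.mulVec x = b ∧ ∀ i, 0 < x i)
    (hs : (∃ y : Fin d → ℝ, Aᵀ.mulVec y + s = c) ∧ ∀ i, 0 < s i)
    (lam : ℝ) (hlam : lam = 16 * Real.log (40 * n))
    (hΦ : ∑ i, Real.cosh (lam * ((x i * s i - t) / t)) ≤ 16 * n)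
    (xb sb : Fin n → ℝ) (hxb : ∀ i, 0 < xb i) (hsb : ∀ i, 0 < sb i)
    (hxc : linf (fun i => Real.log (xb i) - Real.log (x i)) ≤ 1 / 48)
    (hsc : linf (fun i => Real.log (sb i) - Real.log (s i)) ≤ 1 / 48)
    (δμb : Fin n → ℝ) (hδμb : l2 δμb ≤ t / (32 * lam))
    (δx δs : Fin n → ℝ) (δy : Fin d → ℝ)
    (hsys : (Matrix.diagonal sb).mulVec δx + (Matrix.diagonal xb).mulVec δs = δμb ∧
            A.mulVec δx = 0 ∧ Aᵀ.mulVec δy + δs = 0) :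
    (∀ i, 0 < x i + δx i) ∧ (∀ i, 0 < s i + δs i) ∧
    l2 (fun i => Real.log (x i + δx i) - Real.log (x i)) ≤ 1 / (8 * lam) ∧
    l2 (fun i => Real.log (s i + δs i) - Real.log (s i)) ≤ 1 / (8 * lam) := by
  obtain ⟨hxfeas, hx0⟩ := hx
  obtain ⟨hsfeas, hs0⟩ := hs
  obtain ⟨hsys1, hsys2, hsys3⟩ := hsys
  -- basic facts about lam
  have hn1 : (1:ℝ) ≤ n := by exact_mod_cast hn
  have h40 : (40:ℝ) ≤ 40 * n := by nlinarith
  have hL3 : 3 ≤ Real.log (40 * n) := by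
    have hexp3 : Real.exp 3 ≤ 40 := by
      have h := Real.exp_one_lt_d9
      have he : Real.exp 3 = Real.exp 1 * Real.exp 1 * Real.exp 1 := by
        rw [← Real.exp_add, ← Real.exp_add]; norm_num
      nlinarith [Real.exp_pos 1]
    calc (3:ℝ) = Real.log (Real.exp 3) := (Real.log_exp 3).symm
      _ ≤ Real.log 40 := Real.log_le_log (Real.exp_pos 3) hexp3
      _ ≤ Real.log (40*n) := Real.log_le_log (by norm_num) h40
  have hlam48 : 48 ≤ lam := by rw [hlam]; linarith
  have hlam0 : 0 < lam := by linarith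
  -- bounds on x i * s i from the potential
  have hxsb : ∀ i, 15/16*t ≤ x i * s i ∧ x i * s i ≤ 17/16*t := by
    intro i
    have hterm : Real.cosh (lam * ((x i * s i - t)/t)) ≤ 16*n := by
      refine le_trans (Finset.single_le_sum
        (f := fun j => Real.cosh (lam * ((x j * s j - t)/t)))
        (fun j _ => (Real.cosh_pos _).le) (Finset.mem_univ i)) hΦ
    set u := lam * ((x i * s i - t)/t) with hu
    have hcosh := Real.cosh_eq u
    have h1 : Real.exp u ≤ 32*n := by nlinarith [Real.exp_pos (-u)]
    have h2 : Real.exp (-u) ≤ 32*n := by nlinarith [Real.exp_pos u]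
    have hexpL : Real.exp (Real.log (40*n)) = 40*n := Real.exp_log (by positivity)
    have hu1 : u ≤ Real.log (40*n) := by
      have : Real.exp u ≤ Real.exp (Real.log (40*n)) := by rw [hexpL]; nlinarith
      exact Real.exp_le_exp.mp this
    have hu2 : -u ≤ Real.log (40*n) := by
      have : Real.exp (-u) ≤ Real.exp (Real.log (40*n)) := by rw [hexpL]; nlinarith
      exact Real.exp_le_exp.mp this
    rw [hu, hlam] at hu1 hu2
    set L := Real.log (40*n)
    have hr1 : (x i * s i - t)/t ≤ 1/16 := by nlinarith
    have hr2 : -(1/16) ≤ (x i * s i - t)/t := by nlinarith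
    have hre : x i * s i - t = ((x i * s i - t)/t) * t := by field_simp
    constructor <;> nlinarith
  -- componentwise ratio bounds from the ℓ∞ hypotheses
  have hratio : ∀ (v vb : Fin n → ℝ), (∀ i, 0 < v i) → (∀ i, 0 < vb i) →
      linf (fun i => Real.log (vb i) - Real.log (v i)) ≤ 1/48 →
      ∀ i, v i * Real.exp (-(1/48)) ≤ vb i ∧ vb i ≤ v i * Real.exp (1/48) := by
    intro v vb hv hvb h i
    have hcomp : |Real.log (vb i) - Real.log (v i)| ≤ 1/48 := by
      simp only [linf] at h
      exact le_trans (le_ciSup (Set.Finite.bddAbove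
        (Set.finite_range (fun j => |Real.log (vb j) - Real.log (v j)|))) i) h
    rw [abs_le] at hcomp
    constructor
    · have hle : Real.log (v i) + (-(1/48)) ≤ Real.log (vb i) := by linarith
      calc v i * Real.exp (-(1/48)) = Real.exp (Real.log (v i) + (-(1/48))) := by
            rw [Real.exp_add, Real.exp_log (hv i)]
        _ ≤ Real.exp (Real.log (vb i)) := Real.exp_le_exp.mpr hle
        _ = vb i := Real.exp_log (hvb i)
    · have hle : Real.log (vb i) ≤ Real.log (v i) + 1/48 := by linarith
      calc vb i = Real.exp (Real.log (vb i)) := (Real.exp_log (hvb i)).symm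
        _ ≤ Real.exp (Real.log (v i) + 1/48) := Real.exp_le_exp.mpr hle
        _ = v i * Real.exp (1/48) := by rw [Real.exp_add, Real.exp_log (hv i)]
  have hxr := hratio x xb hx0 hxb hxc
  have hsr := hratio s sb hs0 hsb hsc
  -- numeric exponential bounds
  have e24l : (23:ℝ)/24 ≤ Real.exp (-(1/24)) := by
    nlinarith [Real.add_one_le_exp (-(1/24):ℝ)]
  have e24u : Real.exp ((1:ℝ)/24) ≤ 24/23 := by
    have h2 : Real.exp ((1:ℝ)/24) * Real.exp (-(1/24)) = 1 := by rw [← Real.exp_add]; norm_num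
    nlinarith [Real.exp_pos ((1:ℝ)/24)]
  have e48l : (47:ℝ)/48 ≤ Real.exp (-(1/48)) := by
    nlinarith [Real.add_one_le_exp (-(1/48):ℝ)]
  have eprod : Real.exp (-(1/48:ℝ)) * Real.exp (-(1/48:ℝ)) = Real.exp (-(1/24:ℝ)) := by
    rw [← Real.exp_add]; norm_num
  have eprod' : Real.exp ((1:ℝ)/48) * Real.exp ((1:ℝ)/48) = Real.exp ((1:ℝ)/24) := by
    rw [← Real.exp_add]; norm_num
  -- product bounds
  have hgl : ∀ i, 7/8*t ≤ xb i * sb i := by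
    intro i
    have hxi := hx0 i; have hsi := hs0 i
    have m1 : x i * Real.exp (-(1/48)) * (s i * Real.exp (-(1/48))) ≤ xb i * sb i :=
      mul_le_mul (hxr i).1 (hsr i).1 (mul_nonneg hsi.le (Real.exp_pos _).le) (hxb i).le
    have m2 : x i * Real.exp (-(1/48)) * (s i * Real.exp (-(1/48)))
        = x i * s i * Real.exp (-(1/24)) := by rw [← eprod]; ring
    have m3 : 15/16*t * (23/24) ≤ x i * s i * Real.exp (-(1/24)) := by
      have hx1 := (hxsb i).1
      nlinarith [mul_le_mul hx1 e24l (by norm_num) (mul_nonneg hxi.le hsi.le)]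
    nlinarith
  have hgu : ∀ i, xb i * sb i ≤ 9/8*t := by
    intro i
    have hxi := hx0 i; have hsi := hs0 i
    have m1 : xb i * sb i ≤ x i * Real.exp (1/48) * (s i * Real.exp (1/48)) :=
      mul_le_mul (hxr i).2 (hsr i).2 (hsb i).le (mul_nonneg hxi.le (Real.exp_pos _).le)
    have m2 : x i * Real.exp (1/48) * (s i * Real.exp (1/48))
        = x i * s i * Real.exp ((1:ℝ)/24) := by rw [← eprod']; ring
    have m3 : x i * s i * Real.exp ((1:ℝ)/24) ≤ 17/16*t * (24/23) := by
      have hx2 := (hxsb i).2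
      nlinarith [mul_le_mul hx2 e24u (Real.exp_pos ((1:ℝ)/24)).le (by positivity : (0:ℝ) ≤ 17/16*t)]
    nlinarith
  have hxsb3 : ∀ i, 9/10*t ≤ x i * sb i := by
    intro i
    have hxi := hx0 i; have hsi := hs0 i
    have m1 : x i * (s i * Real.exp (-(1/48))) ≤ x i * sb i :=
      mul_le_mul_of_nonneg_left (hsr i).1 hxi.le
    have m3 : 15/16*t * (47/48) ≤ x i * s i * Real.exp (-(1/48)) := by
      have hx1 := (hxsb i).1
      nlinarith [mul_le_mul hx1 e48l (by norm_num) (mul_nonneg hxi.le hsi.le)]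
    nlinarith
  have hsxb3 : ∀ i, 9/10*t ≤ s i * xb i := by
    intro i
    have hxi := hx0 i; have hsi := hs0 i
    have m1 : s i * (x i * Real.exp (-(1/48))) ≤ s i * xb i :=
      mul_le_mul_of_nonneg_left (hxr i).1 hsi.le
    have m3 : 15/16*t * (47/48) ≤ x i * s i * Real.exp (-(1/48)) := by
      have hx1 := (hxsb i).1
      nlinarith [mul_le_mul hx1 e48l (by norm_num) (mul_nonneg hxi.le hsi.le)]
    nlinarith
  have hg0 : ∀ i, 0 < xb i * sb i := fun i => lt_of_lt_of_le (by positivity) (hgl i)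
  -- orthogonality
  have horth : ∑ i, δx i * δs i = 0 := by
    have hδs : ∀ i, δs i = -∑ j, A j i * δy j := by
      intro i
      have := congrFun hsys3 i
      simp [Matrix.mulVec, dotProduct, Matrix.transpose_apply] at this
      linarith
    calc ∑ i, δx i * δs i = -∑ i, ∑ j, δx i * (A j i * δy j) := by
          rw [← Finset.sum_neg_distrib]
          refine Finset.sum_congr rfl (fun i _ => ?_)
          rw [hδs i, mul_neg, Finset.mul_sum]
      _ = -∑ j, (∑ i, A j i * δx i) * δy j := by
          rw [Finset.sum_comm]
          congr 1
          refine Finset.sum_congr rfl (fun j _ => ?_)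
          rw [Finset.sum_mul]
          refine Finset.sum_congr rfl (fun i _ => by ring)
      _ = 0 := by
          have hz : ∀ j, (∑ i, A j i * δx i) = 0 := by
            intro j
            have := congrFun hsys2 j
            simpa [Matrix.mulVec, dotProduct] using this
          simp [hz]
  -- squared norm of δμb
  have hμ2 : ∑ i, (δμb i)^2 ≤ (t/(32*lam))^2 := by
    simp only [l2] at hδμb
    nlinarith [Real.sq_sqrt (show (0:ℝ) ≤ ∑ i, (δμb i)^2 by positivity),
      Real.sqrt_nonneg (∑ i, (δμb i)^2)]
  -- per-component energy identity
  have hper : ∀ i, (sb i*δx i)^2/(xb i*sb i) + (xb i*δs i)^2/(xb i*sb i)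
      = (δμb i)^2/(xb i*sb i) - 2*(δx i*δs i) := by
    intro i
    have heq : sb i * δx i + xb i * δs i = δμb i := by
      have := congrFun hsys1 i
      simpa [Matrix.mulVec_diagonal] using this
    have hxbi := hxb i; have hsbi := hsb i
    field_simp
    linear_combination (sb i*δx i + xb i*δs i + δμb i) * heq
  have hsum_eq : (∑ i, (sb i*δx i)^2/(xb i*sb i)) + (∑ i, (xb i*δs i)^2/(xb i*sb i))
      = ∑ i, (δμb i)^2/(xb i*sb i) := by
    have h0 : ∑ i, ((sb i*δx i)^2/(xb i*sb i) + (xb i*δs i)^2/(xb i*sb i))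
        = ∑ i, ((δμb i)^2/(xb i*sb i) - 2*(δx i*δs i)) :=
      Finset.sum_congr rfl (fun i _ => hper i)
    rw [Finset.sum_add_distrib, Finset.sum_sub_distrib] at h0
    have h1 : ∑ i, 2*(δx i*δs i) = 2 * ∑ i, δx i * δs i := by rw [Finset.mul_sum]
    rw [h1, horth] at h0
    linarith
  -- bound on the mixed sum
  have hM : ∑ i, (δμb i)^2/(xb i*sb i) ≤ 8/7*t/(32*lam)^2 := by
    calc ∑ i, (δμb i)^2/(xb i*sb i)
        ≤ ∑ i, (δμb i)^2/(7/8*t) := by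
          refine Finset.sum_le_sum (fun i _ => ?_)
          exact div_le_div_of_nonneg_left (sq_nonneg _) (by positivity) (hgl i)
      _ = (∑ i, (δμb i)^2)/(7/8*t) := by rw [← Finset.sum_div]
      _ ≤ (t/(32*lam))^2/(7/8*t) := by
          exact div_le_div_of_nonneg_right hμ2 (by positivity)
      _ = 8/7*t/(32*lam)^2 := by field_simp
  have hZnn : (0:ℝ) ≤ ∑ i, (xb i*δs i)^2/(xb i*sb i) :=
    Finset.sum_nonneg (fun i _ => div_nonneg (sq_nonneg _) (hg0 i).le)
  have hWnn : (0:ℝ) ≤ ∑ i, (sb i*δx i)^2/(xb i*sb i) :=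
    Finset.sum_nonneg (fun i _ => div_nonneg (sq_nonneg _) (hg0 i).le)
  have hWsum : ∑ i, (sb i*δx i)^2/(xb i*sb i) ≤ 8/7*t/(32*lam)^2 := by linarith
  have hZsum : ∑ i, (xb i*δs i)^2/(xb i*sb i) ≤ 8/7*t/(32*lam)^2 := by linarith
  -- apply the one-sided lemma twice
  have hxside := side_lemma t lam ht (by linarith) x xb sb δx hx0 hgl hgu hxsb3 hWsum
  have hZsum' : ∑ i, (xb i*δs i)^2/(sb i*xb i) ≤ 8/7*t/(32*lam)^2 := by
    have : ∑ i, (xb i*δs i)^2/(sb i*xb i) = ∑ i, (xb i*δs i)^2/(xb i*sb i) :=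
      Finset.sum_congr rfl (fun i _ => by rw [mul_comm (sb i) (xb i)])
    rw [this]; exact hZsum
  have hgl' : ∀ i, 7/8*t ≤ sb i * xb i := fun i => by rw [mul_comm (sb i) (xb i)]; exact hgl i
  have hgu' : ∀ i, sb i * xb i ≤ 9/8*t := fun i => by rw [mul_comm (sb i) (xb i)]; exact hgu i
  have hsside := side_lemma t lam ht (by linarith) s sb xb δs hs0 hgl' hgu' hsxb3 hZsum'
  exact ⟨hxside.1, hsside.1, hxside.2, hsside.2⟩
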